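/- The presented group on six generators x₁, …, x₆ with defining relations x₆x₅x₄x₃x₂x₁ = e, x₄ = x₅, x₁ = x₄x₃x₄⁻¹, x₄x₃x₂ = x₂x₄x₃, x₄x₃x₂x₄x₃ = x₃x₂x₄x₃x₄, (x₄x₆)² = (x₆x₄)², x₄x₃x₄⁻¹·x₄x₂·x₄x₃x₄⁻¹·x₄ = x₄x₂·x₄x₃x₄⁻¹·x₄·x₄x₃x₄⁻¹, x₂·x₄x₃x₄⁻¹·x₄ = x₄x₃x₄⁻¹·x₄·x₂, x₄x₃x₄⁻¹ = x₂⁻¹x₃⁻¹x₄⁻¹x₆x₄⁻¹x₆⁻¹x₄x₃x₄⁻¹x₆x₄x₆⁻¹x₄x₃x₂, x₂⁻¹x₃⁻¹x₄⁻¹x₆x₄x₆⁻¹x₄x₃x₂ = x₄x₃x₄⁻¹·x₄·x₄x₃⁻¹x₄⁻¹, x₄x₁x₄⁻¹x₆ = x₆x₄x₁x₄⁻¹, x₄x₂x₄⁻¹x₆ = x₆x₄x₂x₄⁻¹, x₅x₃x₅⁻¹x₆ = x₆x₅x₃x₅⁻¹ is isomorphic to the direct product of ℤ with the free group on two generators.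 -/

import Mathlib

namespace Stmt8

/-- Generators `x₁, …, x₆` of the free group, indexed by `0, …, 5`. -/
def x (i : Fin 6) : FreeGroup (Fin 6) := FreeGroup.of i

/-- The relators corresponding to the thirteen defining relations. -/
def rels : Set (FreeGroup (Fin 6)) :=
  { x 5 * x 4 * x 3 * x 2 * x 1 * x 0,
    x 3 * (x 4)⁻¹,
    x 0 * (x 3 * x 2 * (x 3)⁻¹)⁻¹,
    (x 3 * x 2 * x 1) * (x 1 * x 3 * x 2)⁻¹,
    (x 3 * x 2 * x 1 * x 3 * x 2) * (x 2 * x 1 * x 3 * x 2 * x 3)⁻¹,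
    (x 3 * x 5) ^ 2 * ((x 5 * x 3) ^ 2)⁻¹,
    (x 3 * x 2 * (x 3)⁻¹ * x 3 * x 1 * x 3 * x 2 * (x 3)⁻¹ * x 3) *
      (x 3 * x 1 * x 3 * x 2 * (x 3)⁻¹ * x 3 * x 3 * x 2 * (x 3)⁻¹)⁻¹,
    (x 1 * x 3 * x 2 * (x 3)⁻¹ * x 3) * (x 3 * x 2 * (x 3)⁻¹ * x 3 * x 1)⁻¹,
    (x 3 * x 2 * (x 3)⁻¹) *
      ((x 1)⁻¹ * (x 2)⁻¹ * (x 3)⁻¹ * x 5 * (x 3)⁻¹ * (x 5)⁻¹ * x 3 * x 2 * (x 3)⁻¹ *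
        x 5 * x 3 * (x 5)⁻¹ * x 3 * x 2 * x 1)⁻¹,
    ((x 1)⁻¹ * (x 2)⁻¹ * (x 3)⁻¹ * x 5 * x 3 * (x 5)⁻¹ * x 3 * x 2 * x 1) *
      (x 3 * x 2 * (x 3)⁻¹ * x 3 * x 3 * (x 2)⁻¹ * (x 3)⁻¹)⁻¹,
    (x 3 * x 0 * (x 3)⁻¹ * x 5) * (x 5 * x 3 * x 0 * (x 3)⁻¹)⁻¹,
    (x 3 * x 1 * (x 3)⁻¹ * x 5) * (x 5 * x 3 * x 1 * (x 3)⁻¹)⁻¹,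
    (x 4 * x 2 * (x 4)⁻¹ * x 5) * (x 5 * x 4 * x 2 * (x 4)⁻¹)⁻¹ }

/-! ### Auxiliary setup for the proof -/

private abbrev G : Type := PresentedGroup rels
private abbrev T : Type := Multiplicative ℤ × FreeGroup (Fin 2)

private def Zg : T := (Multiplicative.ofAdd 1, 1)
private def Ug : T := (1, FreeGroup.of 0)
private def Cg : T := (1, FreeGroup.of 1)

/-- The images of the six generators in `ℤ × F₂`. -/
private def f6 : Fin 6 → T := ![Ug * Cg⁻¹, Zg * Ug⁻¹ * Ug⁻¹, Cg⁻¹ * Ug, Cg, Cg, Zg⁻¹]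

private lemma hrels : ∀ r ∈ rels, FreeGroup.lift f6 r = 1 := by
  intro r hr
  simp only [rels, Set.mem_insert_iff, Set.mem_singleton_iff] at hr
  rcases hr with rfl | rfl | rfl | rfl | rfl | rfl | rfl | rfl | rfl | rfl | rfl | rfl | rfl <;>
    decide

/-- Shorthand for the image of the `i`-th generator in the presented group. -/
private def g (i : Fin 6) : G := PresentedGroup.of i

private lemma mk_of (i : Fin 6) :
    PresentedGroup.mk rels (FreeGroup.of i) = g i := rfl

private lemma relπ {r : FreeGroup (Fin 6)} (hr : r ∈ rels) :
    PresentedGroup.mk rels r = 1 :=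
  (QuotientGroup.eq_one_iff r).mpr (Subgroup.subset_normalClosure hr)

/-- Relation 2 : `x₄ = x₅`. -/
private lemma hD : g 3 = g 4 := by
  have h := relπ (show x 3 * (x 4)⁻¹ ∈ rels by simp [rels])
  simp only [x, map_mul, map_inv, mk_of] at h
  apply mul_inv_eq_one.mp
  rw [← h]

/-- Relation 3 : `x₁ = x₄ x₃ x₄⁻¹`. -/
private lemma hX0 : g 0 = g 3 * g 2 * (g 3)⁻¹ := by
  have h := relπ (show x 0 * (x 3 * x 2 * (x 3)⁻¹)⁻¹ ∈ rels by simp [rels])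
  simp only [x, map_mul, map_inv, mk_of] at h
  apply mul_inv_eq_one.mp
  rw [← h]

/-- Relation 8 : `A` commutes with `u = C·B`. -/
private lemma hAu : g 1 * (g 3 * g 2) = g 3 * g 2 * g 1 := by
  have h := relπ (show (x 1 * x 3 * x 2 * (x 3)⁻¹ * x 3) * (x 3 * x 2 * (x 3)⁻¹ * x 3 * x 1)⁻¹
      ∈ rels by simp [rels])
  simp only [x, map_mul, map_inv, mk_of] at h
  apply mul_inv_eq_one.mp
  rw [← h]
  group

/-- The central element `v = A·u·u`. -/
private def vv : G := g 1 * (g 3 * g 2) * (g 3 * g 2)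

/-- Relation 7 gives that `C` commutes with `v`. -/
private lemma cCv : g 3 * vv = vv * g 3 := by
  have h7 : g 3 * g 2 * g 1 * (g 3 * g 2 * g 3) = g 3 * g 1 * (g 3 * g 2) * (g 3 * g 2) := by
    have h := relπ (show (x 3 * x 2 * (x 3)⁻¹ * x 3 * x 1 * x 3 * x 2 * (x 3)⁻¹ * x 3) *
        (x 3 * x 1 * x 3 * x 2 * (x 3)⁻¹ * x 3 * x 3 * x 2 * (x 3)⁻¹)⁻¹ ∈ rels by simp [rels])
    simp only [x, map_mul, map_inv, mk_of] at h
    apply mul_inv_eq_one.mp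
    rw [← h]
    group
  calc g 3 * vv = g 3 * g 1 * (g 3 * g 2) * (g 3 * g 2) := by unfold vv; group
    _ = g 3 * g 2 * g 1 * (g 3 * g 2 * g 3) := h7.symm
    _ = g 1 * (g 3 * g 2) * (g 3 * g 2 * g 3) := by rw [hAu]
    _ = vv * g 3 := by unfold vv; group

/-- Relation 1 : `x₆ = v⁻¹`. -/
private lemma hF : g 5 = vv⁻¹ := by
  have h := relπ (show x 5 * x 4 * x 3 * x 2 * x 1 * x 0 ∈ rels by simp [rels])
  simp only [x, map_mul, mk_of] at h
  rw [← hD, hX0] at h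
  have e1 : g 3 * g 2 * g 1 * (g 3 * g 2) = vv := by unfold vv; rw [hAu]
  have e2 : g 3 * (vv * (g 3)⁻¹) = vv := by rw [← mul_assoc, cCv]; group
  apply eq_inv_of_mul_eq_one_left
  rw [← e2, ← e1, ← h]
  group

/-- The homomorphism `G →* ℤ × F₂`. -/
private def phi : G →* T := PresentedGroup.toGroup hrels

private lemma phi_g (i : Fin 6) : phi (g i) = f6 i := PresentedGroup.toGroup.of hrels

/-- The homomorphism `F₂ →* G` sending the free generators to `u` and `C`. -/
private def psi2 : FreeGroup (Fin 2) →* G := FreeGroup.lift ![g 3 * g 2, g 3]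

private lemma comm_v : ∀ w : FreeGroup (Fin 2), Commute vv (psi2 w) := by
  have cAu : Commute (g 1) (g 3 * g 2) := hAu
  have cvu : Commute vv (g 3 * g 2) := by
    unfold vv
    exact Commute.mul_left (Commute.mul_left cAu (Commute.refl _)) (Commute.refl _)
  have base : ∀ i : Fin 2, Commute vv (psi2 (FreeGroup.of i)) := by
    intro i
    fin_cases i
    · simpa [psi2] using cvu
    · simpa [psi2] using (show Commute (g 3) vv from cCv).symm
  intro w
  induction w using FreeGroup.induction_on with
  | C1 => simp
  | of i => exact base i
  | inv_of i _ => rw [map_inv]; exact (base i).inv_right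
  | mul a b ha hb => rw [map_mul]; exact ha.mul_right hb

/-- The homomorphism `ℤ × F₂ →* G`. -/
private def psi : T →* G :=
  MonoidHom.noncommCoprod (zpowersHom G vv) psi2 (fun m w => by
    simpa [zpowersHom_apply] using (comm_v w).zpow_left (Multiplicative.toAdd m))

private lemma psiZ : psi Zg = vv := by
  simp [psi, Zg, MonoidHom.noncommCoprod_apply, zpowersHom_apply]

private lemma psiU : psi Ug = g 3 * g 2 := by
  simp [psi, Ug, psi2, MonoidHom.noncommCoprod_apply, zpowersHom_apply]

private lemma psiC : psi Cg = g 3 := by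
  simp [psi, Cg, psi2, MonoidHom.noncommCoprod_apply, zpowersHom_apply]

private lemma psi_comp_phi : psi.comp phi = MonoidHom.id G := by
  apply PresentedGroup.ext
  intro i
  simp only [MonoidHom.comp_apply, MonoidHom.id_apply]
  have : phi (PresentedGroup.of i) = f6 i := phi_g i
  rw [this]
  fin_cases i
  · -- x₀ = C B C⁻¹
    show psi (f6 0) = g 0
    have : f6 0 = Ug * Cg⁻¹ := rfl
    rw [this, map_mul, map_inv, psiU, psiC, hX0]
  · -- x₁ = v u⁻¹ u⁻¹
    show psi (f6 1) = g 1
    have : f6 1 = Zg * Ug⁻¹ * Ug⁻¹ := rfl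
    simp only [this, map_mul, map_inv, psiZ, psiU]
    unfold vv
    group
  · show psi (f6 2) = g 2
    have : f6 2 = Cg⁻¹ * Ug := rfl
    rw [this, map_mul, map_inv, psiC, psiU]
    group
  · show psi (f6 3) = g 3
    have : f6 3 = Cg := rfl
    rw [this, psiC]
  · show psi (f6 4) = g 4
    have : f6 4 = Cg := rfl
    rw [this, psiC, hD]
  · show psi (f6 5) = g 5
    have : f6 5 = Zg⁻¹ := rfl
    rw [this, map_inv, psiZ, hF]

private lemma phi_vv : phi vv = Zg := by
  have : vv = g 1 * (g 3 * g 2) * (g 3 * g 2) := rfl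
  rw [this]
  simp only [map_mul, phi_g]
  decide

private lemma phi_comp_psi2 :
    phi.comp psi2 = MonoidHom.inr (Multiplicative ℤ) (FreeGroup (Fin 2)) := by
  apply FreeGroup.ext_hom
  intro i
  fin_cases i
  · show phi (psi2 (FreeGroup.of 0)) = _
    have : psi2 (FreeGroup.of 0) = g 3 * g 2 := by simp [psi2]
    rw [this, map_mul, phi_g, phi_g]
    decide
  · show phi (psi2 (FreeGroup.of 1)) = _
    have : psi2 (FreeGroup.of 1) = g 3 := by simp [psi2]
    rw [this, phi_g]
    decide

private lemma phi_comp_psi : phi.comp psi = MonoidHom.id T := by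
  apply MonoidHom.ext
  rintro ⟨m, w⟩
  have : psi (m, w) = vv ^ Multiplicative.toAdd m * psi2 w := rfl
  simp only [MonoidHom.comp_apply, MonoidHom.id_apply, this, map_mul, map_zpow, phi_vv]
  have h2 : phi (psi2 w) = (1, w) := by
    have := congrArg (fun (f : FreeGroup (Fin 2) →* T) => f w) phi_comp_psi2
    simpa using this
  rw [h2]
  have hz : Zg ^ Multiplicative.toAdd m = ((m : Multiplicative ℤ), (1 : FreeGroup (Fin 2))) := by
    have : Zg ^ Multiplicative.toAdd m
        = ((Multiplicative.ofAdd 1 : Multiplicative ℤ) ^ Multiplicative.toAdd m,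
            (1 : FreeGroup (Fin 2)) ^ Multiplicative.toAdd m) := rfl
    rw [this, one_zpow]
    congr 1
    rw [← ofAdd_zsmul, smul_eq_mul, mul_one, ofAdd_toAdd]
  rw [hz, Prod.mk_mul_mk, mul_one, one_mul]

theorem presentation_iso :
    Nonempty (PresentedGroup rels ≃* (Multiplicative ℤ × FreeGroup (Fin 2))) :=
  ⟨MonoidHom.toMulEquiv phi psi psi_comp_phi phi_comp_psi⟩

end Stmt8
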